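/- (Theorem 3.2) Let I be a finite nonempty itemset, R : I → ℝ and M : I → ℝ score functions, P = softmax(R) and Q = softmax(M) the corresponding softmax distributions on I, and Q₀ a probability mass function on I with Q₀(i) > 0 for all i. Let (o_k)_{k≥1} be i.i.d. with law Q₀. For each L, define distributions over the sample indices {1,…,L}: P_S(j) = exp(R(o_j) - log Q₀(o_j)) / ∑_{k=1}^L exp(R(o_k) - log Q₀(o_k)) and Q_S(j) = exp(M(o_j) - log Q₀(o_j)) / ∑_{k=1}^L exp(M(o_k) - log Q₀(o_k)). Then almost surely the sampled KL divergence ∑_{j=1}^L P_S(j) log(P_S(j)/Q_S(j)) converges as L → ∞ to the full KL divergence ∑_{i∈I} P(i) log(P(i)/Q(i)). -/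

import Mathlib

open scoped BigOperators
open MeasureTheory ProbabilityTheory Filter

/-- SLLN for compositions with a function on a finite space. -/
lemma slln_comp_aux {I : Type*} [Fintype I] [MeasurableSpace I] [MeasurableSingletonClass I]
    {Ω : Type*} [MeasurableSpace Ω] (μ : Measure Ω) [IsProbabilityMeasure μ]
    (Q₀ : I → ℝ) (hQpos : ∀ i, 0 < Q₀ i)
    (o : ℕ → Ω → I) (homeas : ∀ k, Measurable (o k))
    (hindep : iIndepFun o μ)
    (hlaw : ∀ k i, μ (o k ⁻¹' {i}) = ENNReal.ofReal (Q₀ i))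
    (f : I → ℝ) :
    ∀ᵐ ω ∂μ, Tendsto (fun L : ℕ => (L : ℝ)⁻¹ * ∑ j ∈ Finset.range L, f (o j ω)) atTop
      (nhds (∑ i, Q₀ i * f i)) := by
  have hfmeas : Measurable f := measurable_of_countable f
  set X : ℕ → Ω → ℝ := fun k ω => f (o k ω) with hX
  have hXmeas : ∀ k, Measurable (X k) := fun k => hfmeas.comp (homeas k)
  -- integrability: bounded by ∑ |f i|
  have hint : Integrable (X 0) μ := by
    refine (integrable_const (∑ i, |f i|)).mono' (hXmeas 0).aestronglyMeasurable ?_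
    refine Filter.Eventually.of_forall fun ω => ?_
    simp only [Real.norm_eq_abs, X]
    exact Finset.single_le_sum (f := fun i => |f i|) (fun i _ => abs_nonneg _)
      (Finset.mem_univ (o 0 ω))
  -- independence
  have hpair : Pairwise (Function.onFun (IndepFun · · μ) X) := by
    intro i j hij
    exact (hindep.indepFun hij).comp hfmeas hfmeas
  -- identically distributed
  have hid : ∀ k, IdentDistrib (X k) (X 0) μ μ := by
    intro k
    have hoid : IdentDistrib (o k) (o 0) μ μ := by
      refine ⟨(homeas k).aemeasurable, (homeas 0).aemeasurable, ?_⟩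
      refine MeasureTheory.Measure.ext_of_singleton fun i => ?_
      rw [Measure.map_apply (homeas k) (measurableSet_singleton i),
        Measure.map_apply (homeas 0) (measurableSet_singleton i), hlaw, hlaw]
    exact hoid.comp hfmeas
  -- expectation
  have hexp : μ[X 0] = ∑ i, Q₀ i * f i := by
    have heq : X 0 = fun ω => ∑ i, Set.indicator ((o 0) ⁻¹' {i}) (fun _ => f i) ω := by
      funext ω
      rw [Finset.sum_eq_single (o 0 ω)]
      · simp [Set.indicator_of_mem, X]
      · intro b _ hb
        exact Set.indicator_of_notMem (by simp [hb.symm]) _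
      · intro h; exact absurd (Finset.mem_univ _) h
    rw [heq, integral_finset_sum]
    · refine Finset.sum_congr rfl fun i _ => ?_
      rw [integral_indicator_const _ ((homeas 0) (measurableSet_singleton i)), measureReal_def, hlaw 0 i,
        smul_eq_mul, ENNReal.toReal_ofReal (hQpos i).le]
    · intro i _
      exact (integrable_const (f i)).indicator ((homeas 0) (measurableSet_singleton i))
  have := strong_law_ae X hint hpair hid
  rw [hexp] at this
  filter_upwards [this] with ω hω
  simpa [smul_eq_mul] using hω

/-- Algebraic identity for the KL sum of two softmax distributions. -/
lemma kl_sum_eq {ι : Type*} (s : Finset ι) (r m : ι → ℝ) :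
    ∑ j ∈ s, (Real.exp (r j) / ∑ k ∈ s, Real.exp (r k)) *
      Real.log ((Real.exp (r j) / ∑ k ∈ s, Real.exp (r k)) /
        (Real.exp (m j) / ∑ k ∈ s, Real.exp (m k))) =
    (∑ j ∈ s, Real.exp (r j) * (r j - m j)) / (∑ k ∈ s, Real.exp (r k)) +
      (Real.log (∑ k ∈ s, Real.exp (m k)) - Real.log (∑ k ∈ s, Real.exp (r k))) := by
  rcases s.eq_empty_or_nonempty with rfl | hs
  · simp
  set SR := ∑ k ∈ s, Real.exp (r k) with hSR
  set SM := ∑ k ∈ s, Real.exp (m k) with hSM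
  have hSRpos : 0 < SR := Finset.sum_pos (fun k _ => Real.exp_pos _) hs
  have hSMpos : 0 < SM := Finset.sum_pos (fun k _ => Real.exp_pos _) hs
  have hterm : ∀ j ∈ s,
      (Real.exp (r j) / SR) * Real.log ((Real.exp (r j) / SR) / (Real.exp (m j) / SM)) =
      (Real.exp (r j) * (r j - m j)) / SR + (Real.exp (r j) / SR) * (Real.log SM - Real.log SR) := by
    intro j _
    have h1 : Real.log ((Real.exp (r j) / SR) / (Real.exp (m j) / SM)) =
        (r j - m j) + (Real.log SM - Real.log SR) := by
      rw [Real.log_div (by positivity) (by positivity),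
        Real.log_div (Real.exp_ne_zero _) hSRpos.ne',
        Real.log_div (Real.exp_ne_zero _) hSMpos.ne',
        Real.log_exp, Real.log_exp]
      ring
    rw [h1]; ring
  rw [Finset.sum_congr rfl hterm, Finset.sum_add_distrib, ← Finset.sum_div, ← Finset.sum_mul,
    ← Finset.sum_div, ← hSR, div_self hSRpos.ne', one_mul]

theorem sampled_KL_tendsto_KL {I : Type*} [Fintype I] [Nonempty I]
    [MeasurableSpace I] [MeasurableSingletonClass I]
    {Ω : Type*} [MeasurableSpace Ω] (μ : Measure Ω) [IsProbabilityMeasure μ]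
    (Q₀ : I → ℝ) (hQpos : ∀ i, 0 < Q₀ i) (hQsum : ∑ i, Q₀ i = 1)
    (R M : I → ℝ)
    (o : ℕ → Ω → I) (homeas : ∀ k, Measurable (o k))
    (hindep : iIndepFun o μ)
    (hlaw : ∀ k i, μ (o k ⁻¹' {i}) = ENNReal.ofReal (Q₀ i)) :
    ∀ᵐ ω ∂μ, Tendsto
      (fun L : ℕ =>
        ∑ j ∈ Finset.range L,
          (Real.exp (R (o j ω) - Real.log (Q₀ (o j ω))) /
            ∑ k ∈ Finset.range L, Real.exp (R (o k ω) - Real.log (Q₀ (o k ω)))) *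
          Real.log
            ((Real.exp (R (o j ω) - Real.log (Q₀ (o j ω))) /
                ∑ k ∈ Finset.range L, Real.exp (R (o k ω) - Real.log (Q₀ (o k ω)))) /
             (Real.exp (M (o j ω) - Real.log (Q₀ (o j ω))) /
                ∑ k ∈ Finset.range L, Real.exp (M (o k ω) - Real.log (Q₀ (o k ω))))))
      atTop
      (nhds (∑ i,
        (Real.exp (R i) / ∑ j, Real.exp (R j)) *
          Real.log ((Real.exp (R i) / ∑ j, Real.exp (R j)) /
            (Real.exp (M i) / ∑ j, Real.exp (M j))))) := by
  -- weight functions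
  set fR : I → ℝ := fun i => Real.exp (R i - Real.log (Q₀ i)) with hfR
  set fM : I → ℝ := fun i => Real.exp (M i - Real.log (Q₀ i)) with hfM
  set fC : I → ℝ := fun i => Real.exp (R i - Real.log (Q₀ i)) * (R i - M i) with hfC
  have hkey : ∀ f : I → ℝ, ∀ (g : I → ℝ), (∀ i, f i = Real.exp (g i - Real.log (Q₀ i))) →
      ∀ h : I → ℝ, (∑ i, Q₀ i * (f i * h i)) = ∑ i, Real.exp (g i) * h i := by
    intro f g hf h
    refine Finset.sum_congr rfl fun i _ => ?_
    rw [hf i, Real.exp_sub, Real.exp_log (hQpos i)]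
    field_simp
    exact mul_div_cancel_left₀ _ (hQpos i).ne'
  have haval : (∑ i, Q₀ i * fR i) = ∑ i, Real.exp (R i) := by
    have := hkey fR R (fun i => rfl) (fun _ => 1); simpa using this
  have hbval : (∑ i, Q₀ i * fM i) = ∑ i, Real.exp (M i) := by
    have := hkey fM M (fun i => rfl) (fun _ => 1); simpa using this
  have hcval : (∑ i, Q₀ i * fC i) = ∑ i, Real.exp (R i) * (R i - M i) := by
    refine Finset.sum_congr rfl fun i _ => ?_
    simp only [fC]
    rw [Real.exp_sub, Real.exp_log (hQpos i)]
    field_simp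
    exact mul_div_cancel_left₀ _ (hQpos i).ne'
  have h1 := slln_comp_aux μ Q₀ hQpos o homeas hindep hlaw fR
  have h2 := slln_comp_aux μ Q₀ hQpos o homeas hindep hlaw fM
  have h3 := slln_comp_aux μ Q₀ hQpos o homeas hindep hlaw fC
  rw [haval] at h1; rw [hbval] at h2; rw [hcval] at h3
  filter_upwards [h1, h2, h3] with ω hA hB hC
  set ZR : ℝ := ∑ i, Real.exp (R i) with hZR
  set ZM : ℝ := ∑ i, Real.exp (M i) with hZM
  have hZRpos : 0 < ZR := Finset.sum_pos (fun i _ => Real.exp_pos _) Finset.univ_nonempty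
  have hZMpos : 0 < ZM := Finset.sum_pos (fun i _ => Real.exp_pos _) Finset.univ_nonempty
  -- rewrite target constant
  have htarget : (∑ i,
        (Real.exp (R i) / ∑ j, Real.exp (R j)) *
          Real.log ((Real.exp (R i) / ∑ j, Real.exp (R j)) /
            (Real.exp (M i) / ∑ j, Real.exp (M j)))) =
      (∑ i, Real.exp (R i) * (R i - M i)) / ZR + (Real.log ZM - Real.log ZR) :=
    kl_sum_eq Finset.univ R M
  rw [htarget]
  -- limit function built from the three averages
  have hAlim : Tendsto (fun L : ℕ => (L : ℝ)⁻¹ * ∑ j ∈ Finset.range L, fR (o j ω)) atTop (nhds ZR) := hA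
  have hlim : Tendsto (fun L : ℕ =>
      ((L : ℝ)⁻¹ * ∑ j ∈ Finset.range L, fC (o j ω)) /
        ((L : ℝ)⁻¹ * ∑ j ∈ Finset.range L, fR (o j ω)) +
      (Real.log ((L : ℝ)⁻¹ * ∑ j ∈ Finset.range L, fM (o j ω)) -
        Real.log ((L : ℝ)⁻¹ * ∑ j ∈ Finset.range L, fR (o j ω)))) atTop
      (nhds ((∑ i, Real.exp (R i) * (R i - M i)) / ZR + (Real.log ZM - Real.log ZR))) := by
    refine Tendsto.add (hC.div hA hZRpos.ne') (Tendsto.sub ?_ ?_)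
    · exact ((Real.continuousAt_log hZMpos.ne').tendsto.comp hB)
    · exact ((Real.continuousAt_log hZRpos.ne').tendsto.comp hA)
  refine Tendsto.congr' ?_ hlim
  filter_upwards [eventually_ge_atTop 1] with L hL
  have hLpos : (0 : ℝ) < (L : ℝ)⁻¹ := by positivity
  have hne : (Finset.range L).Nonempty := Finset.nonempty_range_iff.mpr (by omega)
  set SR : ℝ := ∑ j ∈ Finset.range L, fR (o j ω) with hSR
  set SM : ℝ := ∑ j ∈ Finset.range L, fM (o j ω) with hSM
  set SC : ℝ := ∑ j ∈ Finset.range L, fC (o j ω) with hSC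
  have hSRpos : 0 < SR := Finset.sum_pos (fun j _ => Real.exp_pos _) hne
  have hSMpos : 0 < SM := Finset.sum_pos (fun j _ => Real.exp_pos _) hne
  -- RHS simplification
  have hdiv : ((L : ℝ)⁻¹ * SC) / ((L : ℝ)⁻¹ * SR) = SC / SR :=
    mul_div_mul_left _ _ hLpos.ne'
  have hlogR : Real.log ((L : ℝ)⁻¹ * SR) = Real.log (L : ℝ)⁻¹ + Real.log SR :=
    Real.log_mul hLpos.ne' hSRpos.ne'
  have hlogM : Real.log ((L : ℝ)⁻¹ * SM) = Real.log (L : ℝ)⁻¹ + Real.log SM :=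
    Real.log_mul hLpos.ne' hSMpos.ne'
  rw [hdiv, hlogR, hlogM]
  -- LHS via kl_sum_eq with r j = R (o j ω) - log Q₀ (o j ω) etc.
  have hLHS := kl_sum_eq (Finset.range L) (fun j => R (o j ω) - Real.log (Q₀ (o j ω)))
    (fun j => M (o j ω) - Real.log (Q₀ (o j ω)))
  rw [hLHS]
  have hCeq : (∑ j ∈ Finset.range L,
      Real.exp (R (o j ω) - Real.log (Q₀ (o j ω))) *
        ((R (o j ω) - Real.log (Q₀ (o j ω))) - (M (o j ω) - Real.log (Q₀ (o j ω))))) = SC := by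
    refine Finset.sum_congr rfl fun j _ => ?_
    simp only [fC]; ring_nf
  rw [hCeq]
  ring
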